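/- Let e and E be symmetric positive semidefinite n×n matrices (n ≥ 3) with tr(e) > 0, satisfying ‖e‖ = tr(e), ‖E‖ ≤ tr(E), (e_{23})² = e_{22}e_{33}, and entrywise bounds |e_{ij}|, |E_{ij}| ≤ b. Then |(E_{23})² − E_{22}E_{33}| ≤ C·‖E‖·(1 + tr(E)/tr(e))·√(1 − cos θ_{e,E}), where cos θ_{e,E} = tr(eE)/(‖e‖‖E‖) and C depends only on b. -/

import Mathlib

/-- Frobenius norm of a square matrix. -/
noncomputable def frob {n : ℕ} (M : Matrix (Fin n) (Fin n) ℝ) : ℝ :=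
  Real.sqrt (∑ i, ∑ j, (M i j) ^ 2)

lemma sqrt_two_le_three_halves : Real.sqrt 2 ≤ 3 / 2 := by
  nlinarith [Real.sq_sqrt (show (0:ℝ) ≤ 2 by norm_num), Real.sqrt_nonneg 2]

lemma final_arith (b s S T d ρ A : ℝ) (hb : 0 < b) (hs0 : 0 < s) (hS0 : 0 < S)
    (hST : S ≤ T) (hρ0 : 0 ≤ ρ) (hd0 : 0 ≤ d) (hdρ : d ≤ 3 / 2 * ρ)
    (habs : A ≤ d * (b / S + b / s) + d * (b / S) + (b / s) * d) (hA0 : 0 ≤ A) :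
    S ^ 2 * A ≤ 3 * b * S * (1 + T / s) * ρ := by
  have h7 : S ^ 2 * A ≤ S ^ 2 * (d * (b / S + b / s) + d * (b / S) + (b / s) * d) :=
    mul_le_mul_of_nonneg_left habs (sq_nonneg S)
  have h8 : S ^ 2 * (d * (b / S + b / s) + d * (b / S) + (b / s) * d)
      = 2 * d * b * (S + S ^ 2 / s) := by field_simp; ring
  have hb1 : S ^ 2 / s ≤ S * T / s := by
    rw [sq]
    gcongr
  have hb2 : 0 ≤ S + S ^ 2 / s := by positivity
  have h9 : 2 * d * b * (S + S ^ 2 / s) ≤ 3 * ρ * b * (S + S * T / s) := by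
    have hstep1 : 2 * d * b * (S + S ^ 2 / s) ≤ 3 * ρ * b * (S + S ^ 2 / s) := by
      have h2d : 2 * d ≤ 3 * ρ := by linarith
      have := mul_le_mul_of_nonneg_right
        (mul_le_mul_of_nonneg_right h2d hb.le) hb2
      linarith
    have hstep2 : 3 * ρ * b * (S + S ^ 2 / s) ≤ 3 * ρ * b * (S + S * T / s) := by
      have h0 : 0 ≤ 3 * ρ * b := by positivity
      have := mul_le_mul_of_nonneg_left (show S + S ^ 2 / s ≤ S + S * T / s by linarith) h0
      linarith
    linarith
  calc S ^ 2 * A ≤ 2 * d * b * (S + S ^ 2 / s) := by rw [← h8]; exact h7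
    _ ≤ 3 * ρ * b * (S + S * T / s) := h9
    _ = 3 * b * S * (1 + T / s) * ρ := by ring

lemma frob_nonneg {n : ℕ} (M : Matrix (Fin n) (Fin n) ℝ) : 0 ≤ frob M :=
  Real.sqrt_nonneg _

lemma frob_sq {n : ℕ} (M : Matrix (Fin n) (Fin n) ℝ) :
    frob M ^ 2 = ∑ i, ∑ j, (M i j) ^ 2 :=
  Real.sq_sqrt (by positivity)

lemma sq_entry_le {n : ℕ} (M : Matrix (Fin n) (Fin n) ℝ) (i j : Fin n) :
    (M i j) ^ 2 ≤ ∑ i', ∑ j', (M i' j') ^ 2 :=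
  calc (M i j)^2 ≤ ∑ j', (M i j')^2 :=
      Finset.single_le_sum (f := fun j' => (M i j')^2)
        (fun k _ => sq_nonneg _) (Finset.mem_univ j)
  _ ≤ ∑ i', ∑ j', (M i' j')^2 :=
      Finset.single_le_sum (f := fun i' => ∑ j', (M i' j')^2)
        (fun k _ => Finset.sum_nonneg fun _ _ => sq_nonneg _) (Finset.mem_univ i)

/-- For symmetric PSD matrices `e, E` with `tr e > 0`, `‖e‖ = tr e`, `‖E‖ ≤ tr E`,
`(e_{ij})² = e_{ii}e_{jj}`, and entrywise bounds by `b`, the difference of 2×2 minors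
of `E` is controlled by the angular deviation between `e` and `E`:
`|(E_{ij})² − E_{ii}E_{jj}| ≤ C‖E‖(1 + tr E/tr e)√(1 − cos θ_{e,E})`,
with `C` depending only on `b`. -/
theorem stmt14 (b : ℝ) (hb : 0 < b) :
    ∃ C : ℝ, 0 < C ∧
      ∀ (n : ℕ) (i j : Fin n) (e E : Matrix (Fin n) (Fin n) ℝ),
        e.PosSemidef → E.PosSemidef → 0 < e.trace →
        frob e = e.trace → frob E ≤ E.trace →
        (e i j) ^ 2 = e i i * e j j →
        (∀ i' j', |e i' j'| ≤ b ∧ |E i' j'| ≤ b) →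
        |(E i j) ^ 2 - E i i * E j j| ≤
          C * frob E * (1 + E.trace / e.trace) *
            Real.sqrt (1 - (e * E).trace / (frob e * frob E)) := by
  refine ⟨3 * b, by positivity, ?_⟩
  intro n i j e E he hE het hfe hfE hmin hbd
  set s := frob e with hs
  set S := frob E with hS
  have hs0 : 0 < s := hfe ▸ het
  by_cases hS0 : S = 0
  · -- then all entries of E vanish
    have hsum : ∑ i', ∑ j', (E i' j') ^ 2 = 0 := by
      have h := frob_sq E
      rw [← hS, hS0] at h
      norm_num at h
      linarith
    have hzero : ∀ i' j', E i' j' = 0 := by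
      intro i' j'
      have h1 := sq_entry_le E i' j'
      rw [hsum] at h1
      nlinarith [sq_nonneg (E i' j')]
    rw [hzero i j, hzero i i, hzero j j, hS0]
    simp
  have hSpos : 0 < S := lt_of_le_of_ne (frob_nonneg E) (Ne.symm hS0)
  set r : ℝ := 1 - (e * E).trace / (s * S) with hr
  -- key identity: the distance between the normalized matrices equals 2r
  have hsym : ∀ k m, E m k = E k m := by
    intro k m
    have := hE.isHermitian.apply k m
    simpa using this
  have hX : (e * E).trace = ∑ i', ∑ j', e i' j' * E i' j' := by
    rw [Matrix.trace]
    simp only [Matrix.diag_apply, Matrix.mul_apply]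
    exact Finset.sum_congr rfl fun k _ => Finset.sum_congr rfl fun m _ => by rw [hsym k m]
  have expand : ∀ a c : ℝ, (a / s - c / S) ^ 2
      = a ^ 2 / s ^ 2 - 2 * (a * c) / (s * S) + c ^ 2 / S ^ 2 := by
    intro a c; field_simp; ring
  have key : ∑ i', ∑ j', (e i' j' / s - E i' j' / S) ^ 2 = 2 * r := by
    simp_rw [expand, Finset.sum_add_distrib, Finset.sum_sub_distrib, ← Finset.sum_div,
      ← Finset.mul_sum]
    rw [← hX, ← frob_sq e, ← frob_sq E, ← hs, ← hS, hr]
    field_simp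
    ring
  have hD : 0 ≤ ∑ i', ∑ j', (e i' j' / s - E i' j' / S) ^ 2 :=
    Finset.sum_nonneg fun _ _ => Finset.sum_nonneg fun _ _ => sq_nonneg _
  have hr0 : 0 ≤ r := by linarith [key ▸ hD]
  set ρ := Real.sqrt r with hρ
  have hρ0 : 0 ≤ ρ := Real.sqrt_nonneg _
  -- entrywise distance bound
  have hdist : ∀ i' j', |e i' j' / s - E i' j' / S| ≤ Real.sqrt 2 * ρ := by
    intro i' j'
    have h1 : (e i' j' / s - E i' j' / S) ^ 2 ≤ 2 * r := by
      rw [← key]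
      calc (e i' j' / s - E i' j' / S) ^ 2
          ≤ ∑ j'', (e i' j'' / s - E i' j'' / S) ^ 2 :=
            Finset.single_le_sum (f := fun j'' => (e i' j'' / s - E i' j'' / S) ^ 2)
              (fun k _ => sq_nonneg _) (Finset.mem_univ j')
        _ ≤ _ := Finset.single_le_sum
            (f := fun i'' => ∑ j'', (e i'' j'' / s - E i'' j'' / S) ^ 2)
            (fun k _ => Finset.sum_nonneg fun _ _ => sq_nonneg _) (Finset.mem_univ i')
    calc |e i' j' / s - E i' j' / S| ≤ Real.sqrt (2 * r) := Real.abs_le_sqrt h1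
      _ = Real.sqrt 2 * ρ := by rw [Real.sqrt_mul (by norm_num)]
  set d := Real.sqrt 2 * ρ with hd
  have hd0 : 0 ≤ d := by positivity
  -- normalized entries
  set x1 := e i i / s; set x2 := e j j / s; set x3 := e i j / s
  set y1 := E i i / S; set y2 := E j j / S; set y3 := E i j / S
  have hx3sq : x3 ^ 2 = x1 * x2 := by
    show (e i j / s) ^ 2 = (e i i / s) * (e j j / s)
    rw [div_pow, hmin]
    ring
  have hbx : ∀ i' j', |e i' j' / s| ≤ b / s := by
    intro i' j'; rw [abs_div, abs_of_pos hs0]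
    gcongr
    exact (hbd i' j').1
  have hby : ∀ i' j', |E i' j' / S| ≤ b / S := by
    intro i' j'; rw [abs_div, abs_of_pos hSpos]
    gcongr
    exact (hbd i' j').2
  -- telescoping identity for the minor difference
  have hiden : y3 ^ 2 - y1 * y2 = (y3 - x3) * (y3 + x3) + (x1 - y1) * y2 + x1 * (x2 - y2) := by
    linear_combination hx3sq
  have habs : |y3 ^ 2 - y1 * y2| ≤ d * (b / S + b / s) + d * (b / S) + (b / s) * d := by
    rw [hiden]
    calc |(y3 - x3) * (y3 + x3) + (x1 - y1) * y2 + x1 * (x2 - y2)|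
        ≤ |(y3 - x3) * (y3 + x3)| + |(x1 - y1) * y2| + |x1 * (x2 - y2)| := abs_add_three _ _ _
      _ = |y3 - x3| * |y3 + x3| + |x1 - y1| * |y2| + |x1| * |x2 - y2| := by
          rw [abs_mul, abs_mul, abs_mul]
      _ ≤ d * (b / S + b / s) + d * (b / S) + (b / s) * d := by
          have h1 : |y3 - x3| ≤ d := by rw [abs_sub_comm]; exact hdist i j
          have h2 : |y3 + x3| ≤ b / S + b / s :=
            (abs_add_le _ _).trans (add_le_add (hby i j) (hbx i j))
          have h3 : |x1 - y1| ≤ d := hdist i i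
          have h4 : |y2| ≤ b / S := hby j j
          have h5 : |x1| ≤ b / s := hbx i i
          have h6 : |x2 - y2| ≤ d := hdist j j
          have := abs_nonneg (y3 + x3)
          have := abs_nonneg (y3 - x3)
          have := abs_nonneg y2
          have := abs_nonneg x1
          have := abs_nonneg (x2 - y2)
          nlinarith
  -- rescale back
  have hrescale : |(E i j) ^ 2 - E i i * E j j| = S ^ 2 * |y3 ^ 2 - y1 * y2| := by
    have hval : (E i j) ^ 2 - E i i * E j j = S ^ 2 * (y3 ^ 2 - y1 * y2) := by
      show _ = S ^ 2 * ((E i j / S) ^ 2 - (E i i / S) * (E j j / S))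
      field_simp
    rw [hval, abs_mul, abs_of_pos (show (0:ℝ) < S ^ 2 by positivity)]
  have hsq2 : Real.sqrt 2 ≤ 3 / 2 := sqrt_two_le_three_halves
  have hdρ : d ≤ (3 / 2) * ρ := by
    rw [hd]
    exact mul_le_mul_of_nonneg_right hsq2 hρ0
  have hST : S ≤ E.trace := hfE
  have hT0 : 0 ≤ E.trace := le_trans (frob_nonneg E) hfE
  have hmain : S ^ 2 * |y3 ^ 2 - y1 * y2| ≤ 3 * b * S * (1 + E.trace / s) * ρ :=
    final_arith b s S E.trace d ρ _ hb hs0 hSpos hST hρ0 hd0 hdρ habs (abs_nonneg _)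
  rw [hrescale, ← hfe]
  exact hmain
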